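/- Let d ≥ 3 be an odd integer and ξ₁,…,ξ_d ∈ (0,1). Then the determinant of the (d-1)×(d-1) matrix T(ξ₁,…,ξ_d), defined by T_{ij} = (1-ξ_i) if j = i, = ξ_{i+1} if j = i+1, for i ≤ d-2, and with last row T_{(d-1)j} = -ξ_d for j ≤ d-2 and T_{(d-1)(d-1)} = 1-ξ_{d-1}-ξ_d, equals ∏_{i=1}^d (1-ξ_i) + ∏_{i=1}^d ξ_i, and in particular is strictly positive. -/

import Mathlib

/-- The `(d-1) × (d-1)` matrix `T(ξ₁,…,ξ_d)` (0-indexed parameters `ξ 0, …, ξ (d-1)`):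
row `i` (for `i ≤ d-3`) has `1 - ξ i` on the diagonal, `ξ (i+1)` in column `i+1`, and `0`
elsewhere; the last row (index `d-2`) has `-ξ (d-1)` in columns `0,…,d-3` and
`1 - ξ (d-2) - ξ (d-1)` in the last column. -/
def Tmat (d : ℕ) (ξ : ℕ → ℝ) : Matrix (Fin (d-1)) (Fin (d-1)) ℝ :=
  fun i j =>
    if (i : ℕ) = d - 2 then
      (if (j : ℕ) = d - 2 then 1 - ξ (d-2) - ξ (d-1) else - ξ (d-1))
    else if (j : ℕ) = (i : ℕ) then 1 - ξ (i : ℕ)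
    else if (j : ℕ) = (i : ℕ) + 1 then ξ ((i : ℕ) + 1)
    else 0


def Mmat (n : ℕ) (ξ : ℕ → ℝ) : Matrix (Fin n) (Fin n) ℝ :=
  fun i j =>
    if (i : ℕ) = n - 1 then
      (if (j : ℕ) = n - 1 then 1 - ξ (n-1) - ξ n else - ξ n)
    else if (j : ℕ) = (i : ℕ) then 1 - ξ (i : ℕ)
    else if (j : ℕ) = (i : ℕ) + 1 then ξ ((i : ℕ) + 1)
    else 0

lemma det_Mmat (n : ℕ) : ∀ ξ : ℕ → ℝ, (Mmat (n+1) ξ).det =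
    (∏ i ∈ Finset.range (n+2), (1 - ξ i)) +
      (-1)^(n+1) * ∏ i ∈ Finset.range (n+2), ξ i := by
  induction n with
  | zero =>
    intro ξ
    rw [Matrix.det_fin_one]
    simp [Mmat, Finset.prod_range_succ]
    ring
  | succ n ih =>
    intro ξ
    rw [Matrix.det_succ_column_zero]
    have h0 : ((Mmat (n+2) ξ).submatrix (Fin.succAbove 0) Fin.succ) =
        Mmat (n+1) (fun k => ξ (k+1)) := by
      funext i j
      have hi := i.isLt
      simp only [Matrix.submatrix_apply, Fin.zero_succAbove, Mmat, Fin.val_succ,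
        Nat.add_sub_cancel]
      simp only [show n + 2 - 1 = n + 1 from rfl]
      split_ifs <;> simp_all <;> omega
    have hlast : ((Mmat (n+2) ξ).submatrix (Fin.last (n+1)).succAbove Fin.succ).det =
        ∏ i ∈ Finset.range (n+1), ξ (i+1) := by
      rw [Matrix.det_of_lowerTriangular _ ?ht]
      case ht =>
        intro i j hij
        have hij' : (i : ℕ) < (j : ℕ) := hij
        have hi := i.isLt
        simp only [Matrix.submatrix_apply, Fin.succAbove_last, Mmat, Fin.val_succ,
          Fin.coe_castSucc, Nat.add_sub_cancel]
        split_ifs <;> first | rfl | omega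
      have hd : ∀ i : Fin (n+1),
          ((Mmat (n + 2) ξ).submatrix (Fin.last (n+1)).succAbove Fin.succ) i i
            = ξ ((i:ℕ)+1) := by
        intro i
        have hi := i.isLt
        simp only [Matrix.submatrix_apply, Fin.succAbove_last, Mmat, Fin.val_succ,
          Fin.coe_castSucc, Nat.add_sub_cancel]
        split_ifs <;> first | rfl | omega
      calc (∏ i : Fin (n+1),
            ((Mmat (n + 2) ξ).submatrix (Fin.last (n+1)).succAbove Fin.succ) i i)
          = ∏ i : Fin (n+1), ξ ((i:ℕ)+1) := Finset.prod_congr rfl fun i _ => hd i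
        _ = ∏ i ∈ Finset.range (n+1), ξ (i+1) := Fin.prod_univ_eq_prod_range (fun i => ξ (i+1)) (n+1)
    rw [Fin.sum_univ_succ]
    rw [Finset.sum_eq_single (Fin.last n) ?hz ?hm]
    case hz =>
      intro i _ hne
      have hi : (i : ℕ) ≠ n := fun h => hne (Fin.ext h)
      have hi2 := i.isLt
      have : Mmat (n+2) ξ i.succ 0 = 0 := by
        simp only [Mmat, Fin.val_succ, Fin.val_zero]
        split_ifs <;> simp_all <;> omega
      rw [this]; ring
    case hm => intro h; exact absurd (Finset.mem_univ _) h
    rw [Fin.succ_last, h0, ih]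
    have e1 : Mmat (n+2) ξ 0 0 = 1 - ξ 0 := by
      simp only [Mmat, Fin.val_zero, Nat.add_sub_cancel]
      split_ifs <;> first | rfl | omega
    have e2 : Mmat (n+2) ξ (Fin.last (n+1)) 0 = - ξ (n+2) := by
      simp only [Mmat, Fin.val_last, Fin.val_zero, Nat.add_sub_cancel]
      split_ifs <;> first | rfl | omega
    rw [e1, e2, hlast]
    have p1 : ∏ i ∈ Finset.range (n+3), (1 - ξ i)
        = (∏ i ∈ Finset.range (n+2), (1 - ξ (i+1))) * (1 - ξ 0) :=
      Finset.prod_range_succ' _ _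
    have p2 : ∏ i ∈ Finset.range (n+3), ξ i
        = (∏ i ∈ Finset.range (n+2), ξ (i+1)) * ξ 0 :=
      Finset.prod_range_succ' _ _
    have p3 : ∏ i ∈ Finset.range (n+2), ξ (i+1)
        = (∏ i ∈ Finset.range (n+1), ξ (i+1)) * ξ (n+2) :=
      Finset.prod_range_succ _ _
    show _ = ∏ i ∈ Finset.range (n+3), (1 - ξ i) + (-1)^(n+2) * ∏ i ∈ Finset.range (n+3), ξ i
    rw [p1, p2, p3]
    simp only [Fin.val_succ, Fin.val_last, Fin.val_zero, pow_succ]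
    ring

lemma Tmat_eq_Mmat (d : ℕ) (ξ : ℕ → ℝ) : Tmat d ξ = Mmat (d-1) ξ := rfl

theorem det_Tmat_odd (d : ℕ) (hd : 3 ≤ d) (hodd : Odd d) (ξ : ℕ → ℝ)
    (hξ : ∀ i < d, ξ i ∈ Set.Ioo (0:ℝ) 1) :
    (Tmat d ξ).det = (∏ i ∈ Finset.range d, (1 - ξ i)) + ∏ i ∈ Finset.range d, ξ i ∧
    0 < (Tmat d ξ).det := by
  obtain ⟨n, rfl⟩ : ∃ n, d = n + 3 := ⟨d - 3, by omega⟩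
  have h1 : (Tmat (n+3) ξ).det = (∏ i ∈ Finset.range (n+3), (1 - ξ i)) +
      ∏ i ∈ Finset.range (n+3), ξ i := by
    have hdet := det_Mmat (n+1) ξ
    have hsign : ((-1:ℝ))^(n+2) = 1 := by
      have he : Even (n+2) := by
        rcases hodd with ⟨k, hk⟩
        exact ⟨k, by omega⟩
      exact he.neg_one_pow
    rw [Tmat_eq_Mmat]
    show (Mmat (n+2) ξ).det = _
    rw [hdet, hsign]; ring
  refine ⟨h1, ?_⟩
  rw [h1]
  have hp1 : 0 < ∏ i ∈ Finset.range (n+3), (1 - ξ i) :=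
    Finset.prod_pos fun i hi => by
      have := hξ i (Finset.mem_range.mp hi); linarith [this.2]
  have hp2 : 0 < ∏ i ∈ Finset.range (n+3), ξ i :=
    Finset.prod_pos fun i hi => (hξ i (Finset.mem_range.mp hi)).1
  linarith
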